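/- Exact-divisibility criterion for lopsided division: let a b : ℕ be positive with b odd, b ≤ a, and let Γ = 1 + Nat.size a - Nat.size b. Let c, r : ℕ → ℤ be the lopsided-division sequences for (a : ℤ) and (b : ℤ). Then b divides a (in ℕ) if and only if c Γ = r Γ. -/

import Mathlib

instance : XorOp ℤ := ⟨Int.xor⟩
instance : AndOp ℤ := ⟨Int.land⟩

namespace LopsidedAux

lemma xor_def (x y : ℤ) : x ^^^ y = Int.xor x y := rfl
lemma and_def (x y : ℤ) : x &&& y = Int.land x y := rfl
lemma not_def (x : ℤ) : ~~~x = Int.lnot x := by cases x <;> rfl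

lemma natCast_testBit (n : ℕ) (i : ℕ) : (n : ℤ).testBit i = n.testBit i := rfl

lemma testBit_zero' (i : ℕ) : (0 : ℤ).testBit i = false := by
  show Nat.testBit 0 i = false
  simp

/-- full subtractor identity -/
lemma fullsub (x y z : ℤ) :
    (x ^^^ y ^^^ z) - 2 * (((~~~x) &&& y) ^^^ (y &&& z) ^^^ (z &&& (~~~x)))
      = x - y - z := by
  have key : ∀ n : ℕ, ∀ x y z : ℤ, (2:ℤ)^n ∣
      ((x ^^^ y ^^^ z) - 2 * (((~~~x) &&& y) ^^^ (y &&& z) ^^^ (z &&& (~~~x)))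
        - (x - y - z)) := by
    intro n
    induction n with
    | zero => intro x y z; simp
    | succ n ih =>
      intro x y z
      simp only [xor_def, and_def, not_def]
      rw [← Int.bit_decomp x, ← Int.bit_decomp y, ← Int.bit_decomp z]
      generalize Int.bodd x = bx
      generalize Int.bodd y = by'
      generalize Int.bodd z = bz
      generalize Int.div2 x = X
      generalize Int.div2 y = Y
      generalize Int.div2 z = Z
      simp only [Int.lnot_bit, Int.land_bit, Int.lxor_bit]
      obtain ⟨k, hk⟩ := ih X Y Z
      simp only [xor_def, and_def, not_def] at hk
      refine ⟨k, ?_⟩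
      cases bx <;> cases by' <;> cases bz <;>
        simp only [Int.bit_val, Bool.not_true, Bool.not_false, Bool.and_true,
          Bool.and_false, Bool.true_and, Bool.false_and, Bool.xor_false,
          Bool.xor_true, Bool.false_xor, Bool.true_xor, Bool.not_not,
          cond_true, cond_false] <;>
        linear_combination (2:ℤ) * hk
  set E := (x ^^^ y ^^^ z) - 2 * (((~~~x) &&& y) ^^^ (y &&& z) ^^^ (z &&& (~~~x)))
      - (x - y - z) with hE
  have h : ∀ n : ℕ, (2:ℤ)^n ∣ E := fun n => key n x y z
  have hE0 : E = 0 := by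
    by_contra hne
    have hpos : 0 < |E| := abs_pos.2 hne
    obtain ⟨n, hn⟩ := pow_unbounded_of_one_lt (|E|) (by norm_num : (1:ℤ) < 2)
    have hle : (2:ℤ)^n ≤ |E| := Int.le_of_dvd hpos ((dvd_abs _ _).mpr (h n))
    omega
  have : (x ^^^ y ^^^ z) - 2 * (((~~~x) &&& y) ^^^ (y &&& z) ^^^ (z &&& (~~~x)))
      - (x - y - z) = 0 := hE0
  linarith

/-- bridge between bits and divisibility -/
lemma bridge : ∀ (i : ℕ) (x y : ℤ), (2:ℤ)^i ∣ x - y →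
    ((x.testBit i = y.testBit i) ↔ (2:ℤ)^(i+1) ∣ x - y) := by
  intro i
  induction i with
  | zero =>
    intro x y _
    rw [← Int.bit_decomp x, ← Int.bit_decomp y]
    generalize Int.bodd x = bx
    generalize Int.bodd y = by'
    generalize Int.div2 x = X
    generalize Int.div2 y = Y
    simp only [Int.testBit_bit_zero]
    simp only [Int.bit_val, pow_one, zero_add]
    cases bx <;> cases by' <;> simp <;> omega
  | succ i ih =>
    intro x y h
    rw [← Int.bit_decomp x, ← Int.bit_decomp y] at h ⊢
    generalize Int.bodd x = bx at h ⊢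
    generalize Int.bodd y = by' at h ⊢
    generalize Int.div2 x = X at h ⊢
    generalize Int.div2 y = Y at h ⊢
    have h2 : (2:ℤ) ∣ Int.bit bx X - Int.bit by' Y :=
      dvd_trans (dvd_pow_self 2 (Nat.succ_ne_zero i)) h
    have hbb : bx = by' := by
      cases bx <;> cases by' <;>
        simp only [Int.bit_val, cond_true, cond_false] at h2 <;>
        first | rfl | omega
    subst hbb
    have hdiff : Int.bit bx X - Int.bit bx Y = 2 * (X - Y) := by
      cases bx <;> simp [Int.bit_val] <;> ring
    rw [hdiff] at h ⊢
    rw [pow_succ' 2 i] at h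
    have hXY : (2:ℤ)^i ∣ X - Y := (mul_dvd_mul_iff_left (by norm_num : (2:ℤ) ≠ 0)).mp h
    rw [Int.testBit_bit_succ, Int.testBit_bit_succ, ih X Y hXY,
      pow_succ' 2 (i+1)]
    exact (mul_dvd_mul_iff_left (by norm_num : (2:ℤ) ≠ 0)).symm

lemma bridge0 (i : ℕ) (x : ℤ) (h : (2:ℤ)^i ∣ x) :
    (x.testBit i = false ↔ (2:ℤ)^(i+1) ∣ x) := by
  have := bridge i x 0 (by simpa using h)
  simpa [testBit_zero'] using this

lemma testBit_two_mul (s : ℤ) (i : ℕ) : (2 * s).testBit (i+1) = s.testBit i := by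
  have h : 2 * s = Int.bit false s := by simp [Int.bit_val]
  rw [h, Int.testBit_bit_succ]

lemma testBit_two_pow_mul_self (i : ℕ) (b : ℕ) (hb : Odd b) :
    ((2:ℤ)^i * (b:ℤ)).testBit i = true := by
  have h : (2:ℤ)^i * (b:ℤ) = ((2^i * b : ℕ) : ℤ) := by push_cast; ring
  rw [h, natCast_testBit, Nat.testBit_eq_decide_div_mod_eq]
  have h2 : 2^i * b / 2^i = b := Nat.mul_div_cancel_left _ (Nat.two_pow_pos i)
  rw [h2]
  rcases Nat.odd_iff.mp hb with h3
  simp [h3]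

end LopsidedAux

open LopsidedAux

/-- Exact-divisibility criterion for lopsided division: with
`Γ = 1 + Nat.size a - Nat.size b`, the odd number `b` divides `a` iff `c Γ = r Γ`. -/
theorem lopsided_division_dvd_iff (a b : ℕ) (ha : 0 < a) (hb0 : 0 < b)
    (hb : Odd b) (hba : b ≤ a) (c r : ℕ → ℤ)
    (hc0 : c 0 = (a : ℤ)) (hr0 : r 0 = 0)
    (hc : ∀ i, c (i + 1) =
      c i ^^^ r i ^^^ (if (c i).testBit i then 2 ^ i * (b : ℤ) else 0))
    (hr : ∀ i, r (i + 1) =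
      2 * (((~~~(c i)) &&& r i)
        ^^^ ((r i) &&& (if (c i).testBit i then 2 ^ i * (b : ℤ) else 0))
        ^^^ ((if (c i).testBit i then 2 ^ i * (b : ℤ) else 0) &&& (~~~(c i))))) :
    b ∣ a ↔ c (1 + Nat.size a - Nat.size b) = r (1 + Nat.size a - Nat.size b) := by
  have key : ∀ i, (r i).testBit i = false ∧ (2:ℤ)^i ∣ c i - r i ∧
      ∃ q : ℤ, 0 ≤ q ∧ q < 2^i ∧ c i - r i = (a:ℤ) - (b:ℤ) * q := by
    intro i
    induction i with
    | zero =>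
      exact ⟨by rw [hr0]; exact testBit_zero' 0, by simp,
        0, le_refl 0, by norm_num, by simp [hc0, hr0]⟩
    | succ i ih =>
      obtain ⟨hbit, hdvd, q, hq0, hqlt, heq⟩ := ih
      have hstep : c (i+1) - r (i+1)
          = c i - r i - (if (c i).testBit i then 2^i*(b:ℤ) else 0) := by
        rw [hc i, hr i]
        exact fullsub _ _ _
      have hbit' : (r (i+1)).testBit (i+1) = false := by
        rw [hr i, testBit_two_mul]
        simp only [LopsidedAux.xor_def, and_def, not_def, Int.testBit_lxor, Int.testBit_land,
          Int.testBit_lnot, hbit]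
        by_cases hci : (c i).testBit i
        · simp [hci, testBit_two_pow_mul_self i b hb]
        · simp [hci, testBit_zero']
      have hdvd' : (2:ℤ)^(i+1) ∣ c (i+1) - r (i+1) := by
        rw [hstep]
        by_cases hci : (c i).testBit i
        · rw [if_pos hci]
          have hne : ¬ (2:ℤ)^(i+1) ∣ c i - r i := by
            intro hcon
            have hcc := (bridge i (c i) (r i) hdvd).mpr hcon
            rw [hbit, hci] at hcc
            exact Bool.true_eq_false.mp hcc
          have h1 : (c i - r i).testBit i = true := by
            by_contra hcon
            have hf : (c i - r i).testBit i = false := by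
              simpa using hcon
            exact hne ((bridge0 i _ hdvd).mp hf)
          have hd2 : (2:ℤ)^i ∣ (c i - r i) - 2^i * (b:ℤ) :=
            dvd_sub hdvd ⟨(b:ℤ), rfl⟩
          exact (bridge i _ _ hd2).mp
            (by rw [h1, testBit_two_pow_mul_self i b hb])
        · rw [if_neg hci, sub_zero]
          refine (bridge i _ _ hdvd).mp ?_
          rw [hbit]
          simpa using hci
      refine ⟨hbit', hdvd', q + (if (c i).testBit i then 2^i else 0), ?_, ?_, ?_⟩
      · split <;> positivity
      · split
        · rw [pow_succ]; linarith [pow_pos (by norm_num : (0:ℤ) < 2) i]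
        · rw [pow_succ]; nlinarith [pow_pos (by norm_num : (0:ℤ) < 2) i]
      · rw [hstep, heq]
        split <;> ring
  set Γ := 1 + Nat.size a - Nat.size b with hΓ
  obtain ⟨-, hdvdΓ, q, hq0, hqlt, heq⟩ := key Γ
  constructor
  · intro hdba
    obtain ⟨m, hm⟩ := hdba
    -- m < 2^Γ
    have hsb1 : 1 ≤ Nat.size b := Nat.size_pos.mpr hb0
    have hsba : Nat.size b ≤ Nat.size a := Nat.size_le_size hba
    have hsz : Nat.size a = Γ + (Nat.size b - 1) := by omega
    have hblow : 2^(Nat.size b - 1) ≤ b := by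
      by_contra hcon
      push_neg at hcon
      have := Nat.size_le.mpr hcon
      omega
    have hma : m * 2^(Nat.size b - 1) ≤ a := by
      calc m * 2^(Nat.size b - 1) ≤ m * b := Nat.mul_le_mul_left m hblow
      _ = a := by rw [hm]; ring
    have haup : a < 2^Γ * 2^(Nat.size b - 1) := by
      rw [← pow_add, ← hsz]; exact Nat.lt_size_self a
    have hmlt : m < 2^Γ := by
      by_contra hcon
      push_neg at hcon
      have : 2^Γ * 2^(Nat.size b - 1) ≤ m * 2^(Nat.size b - 1) :=
        Nat.mul_le_mul_right _ hcon
      omega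
    -- integer side
    have heq2 : c Γ - r Γ = (b:ℤ) * ((m:ℤ) - q) := by
      rw [heq, hm]; push_cast; ring
    have hz : (2:ℤ)^Γ ∣ (b:ℤ) * ((m:ℤ) - q) := heq2 ▸ hdvdΓ
    have hco : IsCoprime ((2:ℤ)^Γ) (b:ℤ) := by
      apply IsCoprime.pow_left
      rw [Int.prime_two.coprime_iff_not_dvd]
      intro hcon
      have : (2:ℕ) ∣ b := by exact_mod_cast hcon
      rcases Nat.odd_iff.mp hb with h3
      omega
    have hdq : (2:ℤ)^Γ ∣ (m:ℤ) - q := hco.dvd_of_dvd_mul_left hz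
    have hmq : (m:ℤ) = q := by
      by_contra hcon
      have hpos : 0 < |(m:ℤ) - q| := abs_pos.2 (sub_ne_zero.2 hcon)
      have hle : (2:ℤ)^Γ ≤ |(m:ℤ) - q| :=
        Int.le_of_dvd hpos ((dvd_abs _ _).mpr hdq)
      have hmZ : (m:ℤ) < 2^Γ := by exact_mod_cast hmlt
      have hm0 : (0:ℤ) ≤ (m:ℤ) := Int.natCast_nonneg m
      rcases abs_cases ((m:ℤ) - q) with ⟨h4, _⟩ | ⟨h4, _⟩ <;> omega
    have : c Γ - r Γ = 0 := by rw [heq2, hmq]; ring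
    linarith
  · intro hcr
    have h0 : (a:ℤ) = (b:ℤ) * q := by
      have : c Γ - r Γ = 0 := by rw [hcr]; ring
      rw [this] at heq
      linarith
    exact Int.natCast_dvd_natCast.mp ⟨q, h0⟩
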